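/- The trimming operator T_k satisfies T_k = R_k ∘ ∂_k = R_{k+1} ∘ ∂_k, where ∂_k is the divided difference operator; that is, for every polynomial f, (R_{k+1}f - R_k f)/x_k = R_k(∂_k f) = R_{k+1}(∂_k f). -/

import Mathlib

open MvPolynomial

/-- The Bergeron–Sottile operator `R_k` on the polynomial ring `ℤ[x_1, x_2, …]`. -/
noncomputable def Rop (k : ℕ+) : MvPolynomial ℕ+ ℤ →ₐ[ℤ] MvPolynomial ℕ+ ℤ :=
  aeval fun i => if i < k then X i else if i = k then 0 else X (i - 1)

lemma Rop_X (k i : ℕ+) : Rop k (X i) = if i < k then X i else if i = k then 0 else X (i - 1) := by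
  simp [Rop]

lemma pnat_lt_succ (k : ℕ+) : k < k + 1 := PNat.lt_add_one_iff.mpr le_rfl

lemma pnat_succ_sub (k : ℕ+) : (k + 1) - 1 = k := by
  apply PNat.coe_injective
  rw [PNat.sub_coe]
  simp [PNat.lt_add_one_iff]

lemma Rop_comp_swap (k : ℕ+) (f : MvPolynomial ℕ+ ℤ) :
    Rop k (rename (Equiv.swap k (k + 1)) f) = Rop (k + 1) f := by
  have : (Rop k).comp (rename (Equiv.swap k (k+1))) = Rop (k+1) := by
    apply MvPolynomial.algHom_ext
    intro i
    simp only [AlgHom.comp_apply, rename_X, Rop_X]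
    rcases eq_or_ne i k with h | hik
    · rw [h, Equiv.swap_apply_left]
      have h1 : ¬ (k + 1 < k) := not_lt_of_gt (pnat_lt_succ k)
      have h2 : (k + 1 : ℕ+) ≠ k := by
        intro h; exact absurd (congrArg (PNat.val) h) (by simp)
      rw [if_neg h1, if_neg h2, pnat_succ_sub, if_pos (pnat_lt_succ k)]
    · rcases eq_or_ne i (k+1) with rfl | hik1
      · rw [Equiv.swap_apply_right]
        rw [if_neg (lt_irrefl k), if_pos rfl, if_neg (lt_irrefl (k+1)), if_pos rfl]
      · rw [Equiv.swap_apply_of_ne_of_ne hik hik1]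
        rcases lt_or_gt_of_ne hik with h | h
        · rw [if_pos h, if_pos (h.trans (pnat_lt_succ k))]
        · have h1 : ¬ i < k := not_lt_of_gt h
          have h1' : ¬ i < k + 1 := by
            rw [PNat.lt_add_one_iff]; exact fun hle => absurd (lt_of_lt_of_le h hle) (lt_irrefl k)
          rw [if_neg h1, if_neg hik, if_neg h1', if_neg hik1]
  calc Rop k (rename (Equiv.swap k (k+1)) f)
      = ((Rop k).comp (rename (Equiv.swap k (k+1)))) f := rfl
    _ = Rop (k+1) f := by rw [this]

lemma swap_dvd (k : ℕ+) (f : MvPolynomial ℕ+ ℤ) :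
    (X k - X (k + 1) : MvPolynomial ℕ+ ℤ) ∣ f - rename (Equiv.swap k (k + 1)) f := by
  induction f using MvPolynomial.induction_on with
  | C a => simp
  | add p q hp hq =>
      have : p + q - rename (Equiv.swap k (k+1)) (p + q)
          = (p - rename (Equiv.swap k (k+1)) p) + (q - rename (Equiv.swap k (k+1)) q) := by
        rw [map_add]; ring
      rw [this]; exact dvd_add hp hq
  | mul_X p n hp =>
      have key : (X k - X (k + 1) : MvPolynomial ℕ+ ℤ) ∣ X n - X (Equiv.swap k (k+1) n) := by
        rcases eq_or_ne n k with rfl | h1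
        · rw [Equiv.swap_apply_left]
        · rcases eq_or_ne n (k+1) with rfl | h2
          · rw [Equiv.swap_apply_right]
            exact ⟨-1, by ring⟩
          · rw [Equiv.swap_apply_of_ne_of_ne h1 h2, sub_self]
            exact dvd_zero _
      have : p * X n - rename (Equiv.swap k (k+1)) (p * X n)
          = (p - rename (Equiv.swap k (k+1)) p) * X (Equiv.swap k (k+1) n)
            + p * (X n - X (Equiv.swap k (k+1) n)) := by
        rw [map_mul, rename_X]; ring
      rw [this]
      exact dvd_add (hp.mul_right _) (key.mul_left _)

/-- The trimming operator satisfies `T_k = R_k ∘ ∂_k = R_{k+1} ∘ ∂_k`: for every `f`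
there is `d` with `f - s_k f = (x_k - x_{k+1})·d` (so `d = ∂_k f`), and
`R_{k+1} f - R_k f = x_k · R_k(d)` (in particular `x_k` divides `R_{k+1} f - R_k f`,
and `T_k f = R_k(∂_k f)`), with moreover `R_k(d) = R_{k+1}(d)`. -/
theorem stmt11 (k : ℕ+) (f : MvPolynomial ℕ+ ℤ) :
    ∃ d : MvPolynomial ℕ+ ℤ,
      f - rename (Equiv.swap k (k + 1)) f = (X k - X (k + 1)) * d ∧
      Rop (k + 1) f - Rop k f = X k * Rop k d ∧
      Rop k d = Rop (k + 1) d := by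
  obtain ⟨d, hd⟩ := swap_dvd k f
  have hXk : Rop k (X k : MvPolynomial ℕ+ ℤ) = 0 := by
    rw [Rop_X]; simp
  have hXk1 : Rop k (X (k+1) : MvPolynomial ℕ+ ℤ) = X k := by
    rw [Rop_X]
    have h1 : ¬ (k + 1 < k) := not_lt_of_gt (pnat_lt_succ k)
    have h2 : (k + 1 : ℕ+) ≠ k := by
      intro h; exact absurd (congrArg (PNat.val) h) (by simp)
    rw [if_neg h1, if_neg h2, pnat_succ_sub]
  have hXk' : Rop (k+1) (X k : MvPolynomial ℕ+ ℤ) = X k := by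
    rw [Rop_X, if_pos (pnat_lt_succ k)]
  have hXk1' : Rop (k+1) (X (k+1) : MvPolynomial ℕ+ ℤ) = 0 := by
    rw [Rop_X]; simp
  -- apply Rop k to hd
  have e1 := congrArg (Rop k) hd
  rw [map_sub, map_mul, map_sub, Rop_comp_swap, hXk, hXk1] at e1
  -- e1 : Rop k f - Rop (k+1) f = (0 - X k) * Rop k d
  have e2 := congrArg (Rop (k+1)) hd
  rw [map_sub, map_mul, map_sub, hXk', hXk1'] at e2
  have hswap : Rop (k+1) (rename (Equiv.swap k (k+1)) f) = Rop k f := by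
    have h0 : rename (Equiv.swap k (k+1)) (rename (Equiv.swap k (k+1)) f) = f := by
      rw [rename_rename]
      have hcomp : (⇑(Equiv.swap k (k+1)) ∘ ⇑(Equiv.swap k (k+1))) = id := by
        ext x; simp
      rw [hcomp, rename_id, AlgHom.id_apply]
    rw [← Rop_comp_swap k (rename (Equiv.swap k (k+1)) f), h0]
  rw [hswap] at e2
  -- e2 : Rop (k+1) f - Rop k f = (X k - 0) * Rop (k+1) d
  have eq2 : Rop (k+1) f - Rop k f = X k * Rop k d := by
    linear_combination -e1
  refine ⟨d, hd, eq2, ?_⟩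
  have heq : (X k : MvPolynomial ℕ+ ℤ) * Rop k d = X k * Rop (k+1) d := by
    linear_combination e2 - eq2
  exact mul_left_cancel₀ (X_ne_zero k) heq
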